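/- Let K be the underlying space of a finite geometric simplicial complex in a Euclidean space ℝ^N, with the metric induced from ℝ^N. Then there exists ε > 0 such that for every topological space W and all continuous maps f, g : W → K with dist(f(w), g(w)) ≤ ε for every w ∈ W, the maps f and g are homotopic. -/

import Mathlib

open Metric Finset Set Geometry

section Stmt12Aux

variable {N : ℕ}

local notation "E" N => EuclideanSpace ℝ (Fin N)


/-- `w` is a barycentric representation of `x` in the complex `S`. -/
def IsRep (S : SimplicialComplex ℝ (E N)) (x : E N) (w : (E N) → ℝ) : Prop :=
  (∀ u, 0 ≤ w u) ∧ ∃ s ∈ S.faces, x ∈ convexHull ℝ (s : Set (E N)) ∧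
    (∀ u, u ∉ s → w u = 0) ∧ (∑ u ∈ s, w u = 1) ∧ (∑ u ∈ s, w u • u = x)

lemma exists_isRep_of_mem_hull {S : SimplicialComplex ℝ (E N)} {s : Finset (E N)}
    (hs : s ∈ S.faces) {x : E N} (hx : x ∈ convexHull ℝ (s : Set (E N))) :
    ∃ w, IsRep S x w ∧ (∀ u, u ∉ s → w u = 0) ∧
      (∑ u ∈ s, w u = 1) ∧ (∑ u ∈ s, w u • u = x) := by
  classical
  have hx' := hx
  rw [Finset.convexHull_eq] at hx'
  obtain ⟨w, hw0, hw1, hwx⟩ := hx'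
  have hsupp : ∀ u, u ∉ s → (if u ∈ s then w u else 0) = 0 := by intro u hu; simp [hu]
  have hsum : ∑ u ∈ s, (if u ∈ s then w u else 0) = 1 := by
    rw [Finset.sum_congr rfl (fun u hu => if_pos hu)]; exact hw1
  have hcomb : ∑ u ∈ s, (if u ∈ s then w u else 0) • u = x := by
    have h1 : ∑ u ∈ s, (if u ∈ s then w u else 0) • u = ∑ u ∈ s, w u • u :=
      Finset.sum_congr rfl (fun u hu => by rw [if_pos hu])
    rw [h1]
    rw [Finset.centerMass_eq_of_sum_1 _ id hw1] at hwx
    simpa using hwx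
  refine ⟨fun u => if u ∈ s then w u else 0, ⟨?_, s, hs, hx, hsupp, hsum, hcomb⟩,
    hsupp, hsum, hcomb⟩
  intro u
  by_cases h : u ∈ s <;> simp only [h, if_true, if_false, le_refl]
  exact hw0 u h

/-- Two representations supported on the same face agree. -/
lemma rep_eq_on_face {S : SimplicialComplex ℝ (E N)} {s : Finset (E N)} (hs : s ∈ S.faces)
    {x : E N} {w w' : (E N) → ℝ}
    (hw : ∀ u, u ∉ s → w u = 0) (hw' : ∀ u, u ∉ s → w' u = 0)
    (hsum : ∑ u ∈ s, w u = 1) (hsum' : ∑ u ∈ s, w' u = 1)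
    (hc : ∑ u ∈ s, w u • u = x) (hc' : ∑ u ∈ s, w' u • u = x) : w = w' := by
  classical
  have ind := S.indep hs
  have hsa : ∑ i ∈ s.attach, w ↑i = 1 := by rw [Finset.sum_attach]; exact hsum
  have hsa' : ∑ i ∈ s.attach, w' ↑i = 1 := by rw [Finset.sum_attach]; exact hsum'
  have hca : s.attach.affineCombination ℝ (fun i : {y // y ∈ s} => (i : E N))
      (fun i => w ↑i) = x := by
    rw [Finset.affineCombination_eq_linear_combination _ _ _ hsa]
    rw [Finset.sum_attach s (fun u => w u • u)]; exact hc
  have hca' : s.attach.affineCombination ℝ (fun i : {y // y ∈ s} => (i : E N))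
      (fun i => w' ↑i) = x := by
    rw [Finset.affineCombination_eq_linear_combination _ _ _ hsa']
    rw [Finset.sum_attach s (fun u => w' u • u)]; exact hc'
  have key := ind.indicator_eq_of_affineCombination_eq s.attach s.attach
    (fun i => w ↑i) (fun i => w' ↑i) hsa hsa' (hca.trans hca'.symm)
  funext u
  by_cases hu : u ∈ s
  · have h1 := congrFun key ⟨u, hu⟩
    rwa [Set.indicator_of_mem (by simp [Finset.mem_attach]),
      Set.indicator_of_mem (by simp [Finset.mem_attach])] at h1
  · rw [hw u hu, hw' u hu]

lemma isRep_unique {S : SimplicialComplex ℝ (E N)} {x : E N} {w₁ w₂ : (E N) → ℝ}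
    (h₁ : IsRep S x w₁) (h₂ : IsRep S x w₂) : w₁ = w₂ := by
  classical
  obtain ⟨h₁0, s, hs, hxs, h₁s, h₁sum, h₁c⟩ := h₁
  obtain ⟨h₂0, t, ht, hxt, h₂t, h₂sum, h₂c⟩ := h₂
  have hxst : x ∈ convexHull ℝ ((s ∩ t : Finset (E N)) : Set (E N)) := by
    have := S.inter_subset_convexHull hs ht ⟨hxs, hxt⟩
    rwa [← Finset.coe_inter] at this
  have hst : (s ∩ t : Finset (E N)) ∈ S.faces := by
    refine S.down_closed hs (Finset.inter_subset_left) ?_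
    by_contra h; rw [Finset.not_nonempty_iff_eq_empty] at h
    rw [h] at hxst
    simpa using hxst
  obtain ⟨w₃, hw₃, hw₃supp, hw₃sum, hw₃c⟩ := exists_isRep_of_mem_hull hst hxst
  -- compare w₁ and w₃ over s
  have hw₃supps : ∀ u, u ∉ s → w₃ u = 0 := fun u hu =>
    hw₃supp u (fun h => hu (Finset.mem_inter.1 h).1)
  have hw₃suppt : ∀ u, u ∉ t → w₃ u = 0 := fun u hu =>
    hw₃supp u (fun h => hu (Finset.mem_inter.1 h).2)
  have hsub : (s ∩ t : Finset (E N)) ⊆ s := Finset.inter_subset_left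
  have hsubt : (s ∩ t : Finset (E N)) ⊆ t := Finset.inter_subset_right
  have h₃sums : ∑ u ∈ s, w₃ u = 1 := by
    rw [← Finset.sum_subset hsub (fun u _ hu => hw₃supp u hu)]; exact hw₃sum
  have h₃cs : ∑ u ∈ s, w₃ u • u = x := by
    rw [← Finset.sum_subset hsub (fun u _ hu => by rw [hw₃supp u hu, zero_smul])]; exact hw₃c
  have h₃sumt : ∑ u ∈ t, w₃ u = 1 := by
    rw [← Finset.sum_subset hsubt (fun u _ hu => hw₃supp u hu)]; exact hw₃sum
  have h₃ct : ∑ u ∈ t, w₃ u • u = x := by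
    rw [← Finset.sum_subset hsubt (fun u _ hu => by rw [hw₃supp u hu, zero_smul])]; exact hw₃c
  have e₁ : w₁ = w₃ := rep_eq_on_face hs h₁s hw₃supps h₁sum h₃sums h₁c h₃cs
  have e₂ : w₂ = w₃ := rep_eq_on_face ht h₂t hw₃suppt h₂sum h₃sumt h₂c h₃ct
  rw [e₁, e₂]

/-- The (global) barycentric weight function of a point of a simplicial complex. -/
noncomputable def repW (S : SimplicialComplex ℝ (E N)) (x : E N) : (E N) → ℝ :=
  open scoped Classical in
  if h : ∃ w, IsRep S x w then h.choose else 0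

lemma repW_isRep {S : SimplicialComplex ℝ (E N)} {x : E N} (hx : x ∈ S.space) :
    IsRep S x (repW S x) := by
  obtain ⟨s, hs, hxs⟩ := Set.mem_iUnion₂.1 hx
  obtain ⟨w, hw, -⟩ := exists_isRep_of_mem_hull hs hxs
  have h : ∃ w, IsRep S x w := ⟨w, hw⟩
  rw [repW, dif_pos h]
  exact h.choose_spec

lemma repW_eq {S : SimplicialComplex ℝ (E N)} {x : E N} {w : (E N) → ℝ}
    (h : IsRep S x w) : repW S x = w := by
  have hex : ∃ w, IsRep S x w := ⟨w, h⟩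
  rw [repW, dif_pos hex]
  exact isRep_unique hex.choose_spec h

lemma repW_nonneg {S : SimplicialComplex ℝ (E N)} {x : E N} (hx : x ∈ S.space) (u : E N) :
    0 ≤ repW S x u := (repW_isRep hx).1 u

/-- vanishing outside any face whose hull contains `x`. -/
lemma repW_eq_zero {S : SimplicialComplex ℝ (E N)} {s : Finset (E N)} (hs : s ∈ S.faces)
    {x : E N} (hx : x ∈ convexHull ℝ (s : Set (E N))) {u : E N} (hu : u ∉ s) :
    repW S x u = 0 := by
  obtain ⟨w, hw, hsupp, -, -⟩ := exists_isRep_of_mem_hull hs hx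
  rw [repW_eq hw]
  exact hsupp u hu

lemma repW_sum {S : SimplicialComplex ℝ (E N)} {s : Finset (E N)} (hs : s ∈ S.faces)
    {x : E N} (hx : x ∈ convexHull ℝ (s : Set (E N))) :
    ∑ u ∈ s, repW S x u = 1 := by
  obtain ⟨w, hw, -, hsum, -⟩ := exists_isRep_of_mem_hull hs hx
  rw [repW_eq hw]; exact hsum

lemma repW_comb {S : SimplicialComplex ℝ (E N)} {s : Finset (E N)} (hs : s ∈ S.faces)
    {x : E N} (hx : x ∈ convexHull ℝ (s : Set (E N))) :
    ∑ u ∈ s, repW S x u • u = x := by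
  obtain ⟨w, hw, -, -, hc⟩ := exists_isRep_of_mem_hull hs hx
  rw [repW_eq hw]; exact hc

/-- On the hull of a single face, the weight function of a vertex is continuous
(it agrees with an affine barycentric coordinate). -/
lemma continuousOn_repW_face {S : SimplicialComplex ℝ (E N)} {s : Finset (E N)}
    (hs : s ∈ S.faces) (v : E N) :
    ContinuousOn (fun x => repW S x v) (convexHull ℝ (s : Set (E N))) := by
  classical
  have ind : AffineIndependent ℝ (fun p => p : ((s : Set (E N)) : Type _) → (E N)) := S.indep hs
  obtain ⟨t, hst, hti, htt⟩ := exists_subset_affineIndependent_affineSpan_eq_top ind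
  let B : AffineBasis t ℝ (E N) := ⟨fun p => (p : E N), hti, by
    rw [Subtype.range_coe]; exact htt⟩
  by_cases hv : v ∈ s
  · -- agrees with B.coord ⟨v, _⟩
    have hvt : v ∈ t := hst hv
    refine ContinuousOn.congr ((continuous_barycentric_coord B ⟨v, hvt⟩).continuousOn) ?_
    intro y hy
    -- write y as an affine combination of the basis points indexed by s
    set s' : Finset t := s.attach.map
      ⟨fun i => (⟨i.1, hst i.2⟩ : t), by
        intro a b hab
        exact Subtype.ext (congrArg (fun z : t => z.1) hab)⟩ with hs'
    have hsum : ∑ u ∈ s, repW S y u = 1 := repW_sum hs hy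
    have hsum' : ∑ j ∈ s', repW S y ↑j = 1 := by
      rw [hs', Finset.sum_map]
      show ∑ i ∈ s.attach, repW S y i.1 = 1
      exact (Finset.sum_attach s (fun u => repW S y u)).trans hsum
    have hcomb : s'.affineCombination ℝ B (fun j => repW S y ↑j) = y := by
      rw [Finset.affineCombination_eq_linear_combination _ _ _ hsum']
      rw [hs', Finset.sum_map]
      show ∑ i ∈ s.attach, repW S y i.1 • i.1 = y
      exact (Finset.sum_attach s (fun u => repW S y u • u)).trans (repW_comb hs hy)
    have hmem : (⟨v, hvt⟩ : t) ∈ s' := by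
      rw [hs', Finset.mem_map]
      exact ⟨⟨v, hv⟩, Finset.mem_attach _ _, rfl⟩
    have := B.coord_apply_combination_of_mem hmem hsum'
    rw [hcomb] at this
    exact this.symm
  · refine ContinuousOn.congr (continuousOn_const (c := (0 : ℝ))) ?_
    intro y hy
    exact repW_eq_zero hs hy hv

lemma continuousOn_repW {S : SimplicialComplex ℝ (E N)} {F : Finset (Finset (E N))}
    (hF : S.faces = ↑F) (v : E N) :
    ContinuousOn (fun x => repW S x v) S.space := by
  classical
  intro x hx
  -- faces whose hull contains x, resp. doesn't
  set A : Finset (Finset (E N)) := F.filter (fun s => x ∈ convexHull ℝ (s : Set (E N))) with hA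
  set A' : Finset (Finset (E N)) := F.filter
    (fun s : Finset (E N) => x ∉ convexHull ℝ (s : Set (E N))) with hA'
  set C : Set (E N) := ⋃ s ∈ A', convexHull ℝ (s : Set (E N)) with hC
  have hCclosed : IsClosed C := by
    refine Set.Finite.isClosed_biUnion (Finset.finite_toSet _) ?_
    intro s _
    exact (Set.Finite.isCompact_convexHull ℝ (s.finite_toSet)).isClosed
  have hxC : x ∉ C := by
    rw [hC]
    simp only [Set.mem_iUnion, not_exists]
    intro s hs
    exact (Finset.mem_filter.1 hs).2
  set bigU : Set (E N) := ⋃ s ∈ A, convexHull ℝ (s : Set (E N)) with hbigU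
  have hcwa : ContinuousWithinAt (fun y => repW S y v) bigU x := by
    rw [ContinuousWithinAt, hbigU, ← Finset.set_biUnion_coe, nhdsWithin_biUnion
      (Finset.finite_toSet A) _ x]
    rw [Filter.tendsto_iSup]
    intro s
    rw [Filter.tendsto_iSup]
    intro hs
    have hs' := Finset.mem_filter.1 hs
    have : s ∈ S.faces := by rw [hF]; exact hs'.1
    exact continuousOn_repW_face this v x hs'.2
  refine hcwa.mono_of_mem_nhdsWithin ?_
  have hsub : S.space ∩ Cᶜ ⊆ bigU := by
    rintro y ⟨hy, hyC⟩
    obtain ⟨s, hs, hys⟩ := Set.mem_iUnion₂.1 hy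
    have hsF : s ∈ F := by rw [hF] at hs; exact Finset.mem_coe.1 hs
    by_cases hxs : x ∈ convexHull ℝ (s : Set (E N))
    · exact Set.mem_iUnion₂.2 ⟨s, Finset.mem_filter.2 ⟨hsF, hxs⟩, hys⟩
    · exfalso
      exact hyC (Set.mem_iUnion₂.2 ⟨s, Finset.mem_filter.2 ⟨hsF, hxs⟩, hys⟩)
  refine Filter.mem_of_superset ?_ hsub
  exact Filter.inter_mem self_mem_nhdsWithin
    (mem_nhdsWithin_of_mem_nhds (hCclosed.isOpen_compl.mem_nhds hxC))



variable {S : SimplicialComplex ℝ (E N)} {F : Finset (Finset (E N))}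

/-- The support of the weight function of `x` within the vertex set. -/
noncomputable def suppF (S : SimplicialComplex ℝ (E N)) (F : Finset (Finset (E N)))
    (x : E N) : Finset (E N) :=
  open scoped Classical in (F.biUnion id).filter (fun u => repW S x u ≠ 0)

lemma suppF_subset_face (hF : S.faces = ↑F) {s : Finset (E N)} (hs : s ∈ S.faces)
    {x : E N} (hx : x ∈ convexHull ℝ (s : Set (E N))) : suppF S F x ⊆ s := by
  classical
  intro u hu
  rw [suppF, Finset.mem_filter] at hu
  by_contra hus
  exact hu.2 (repW_eq_zero hs hx hus)

lemma exists_mem_suppF (hF : S.faces = ↑F) {x : E N} (hx : x ∈ S.space) :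
    ∃ u ∈ suppF S F x, repW S x u ≠ 0 := by
  classical
  obtain ⟨s, hs, hxs⟩ := Set.mem_iUnion₂.1 hx
  have hsum := repW_sum hs hxs
  obtain ⟨u, hus, hune⟩ := Finset.exists_ne_zero_of_sum_ne_zero (by rw [hsum]; norm_num)
  have hsF : s ∈ F := by rw [hF] at hs; exact Finset.mem_coe.1 hs
  have huV : u ∈ F.biUnion id := Finset.mem_biUnion.2 ⟨s, hsF, hus⟩
  exact ⟨u, by rw [suppF, Finset.mem_filter]; exact ⟨huV, hune⟩, hune⟩

lemma suppF_mem_faces (hF : S.faces = ↑F) {x : E N} (hx : x ∈ S.space) :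
    suppF S F x ∈ S.faces := by
  classical
  obtain ⟨s, hs, hxs⟩ := Set.mem_iUnion₂.1 hx
  refine S.down_closed hs (suppF_subset_face hF hs hxs) ?_
  obtain ⟨u, hu, -⟩ := exists_mem_suppF hF hx
  exact ⟨u, hu⟩

lemma sum_suppF (hF : S.faces = ↑F) {x : E N} (hx : x ∈ S.space) :
    ∑ u ∈ suppF S F x, repW S x u = 1 := by
  classical
  obtain ⟨s, hs, hxs⟩ := Set.mem_iUnion₂.1 hx
  rw [Finset.sum_subset (suppF_subset_face hF hs hxs) ?_]
  · exact repW_sum hs hxs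
  · intro u hus hu
    by_contra h
    have huV : u ∈ F.biUnion id := Finset.mem_biUnion.2
      ⟨s, by rw [hF] at hs; exact Finset.mem_coe.1 hs, hus⟩
    exact hu (by rw [suppF, Finset.mem_filter]; exact ⟨huV, h⟩)

lemma comb_suppF (hF : S.faces = ↑F) {x : E N} (hx : x ∈ S.space) :
    ∑ u ∈ suppF S F x, repW S x u • u = x := by
  classical
  obtain ⟨s, hs, hxs⟩ := Set.mem_iUnion₂.1 hx
  rw [Finset.sum_subset (suppF_subset_face hF hs hxs) ?_]
  · exact repW_comb hs hxs
  · intro u hus hu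
    have : repW S x u = 0 := by
      by_contra h
      have huV : u ∈ F.biUnion id := Finset.mem_biUnion.2
        ⟨s, by rw [hF] at hs; exact Finset.mem_coe.1 hs, hus⟩
      exact hu (by rw [suppF, Finset.mem_filter]; exact ⟨huV, h⟩)
    rw [this, zero_smul]

lemma mem_hull_suppF (hF : S.faces = ↑F) {x : E N} (hx : x ∈ S.space) :
    x ∈ convexHull ℝ ((suppF S F x : Finset (E N)) : Set (E N)) := by
  classical
  have hsum := sum_suppF hF hx
  have h := Finset.centerMass_mem_convexHull (suppF S F x)
    (fun u _ => repW_nonneg hx u) (by rw [hsum]; norm_num)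
    (fun u hu => Finset.mem_coe.2 hu : ∀ u ∈ suppF S F x, id u ∈ ((suppF S F x : Finset (E N)) : Set (E N)))
  rw [Finset.centerMass_eq_of_sum_1 _ id hsum] at h
  simp only [id] at h
  rwa [comb_suppF hF hx] at h

lemma hull_suppF_subset (hF : S.faces = ↑F) {x : E N} (hx : x ∈ S.space) :
    convexHull ℝ ((suppF S F x : Finset (E N)) : Set (E N)) ⊆ S.space :=
  fun y hy => Set.mem_iUnion₂.2 ⟨suppF S F x, suppF_mem_faces hF hx, hy⟩


lemma suppF_def {S : SimplicialComplex ℝ (E N)} {F : Finset (Finset (E N))} (x u : E N) :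
    u ∈ suppF S F x ↔ (∃ s ∈ F, u ∈ s) ∧ repW S x u ≠ 0 := by
  classical
  rw [suppF, Finset.mem_filter, Finset.mem_biUnion]
  rfl

end Stmt12Aux

/-- for the underlying space `K` of a finite geometric simplicial complex there is
`ε > 0` such that any two continuous maps into `K` that are pointwise `ε`-close are homotopic. -/
theorem stmt12 (N : ℕ) (S : Geometry.SimplicialComplex ℝ (EuclideanSpace ℝ (Fin N)))
    (hfin : S.faces.Finite) :
    ∃ ε : ℝ, 0 < ε ∧
      ∀ (W : Type*) [TopologicalSpace W] (f g : C(W, ↥S.space)),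
        (∀ w : W, dist (f w) (g w) ≤ ε) → f.Homotopic g := by
  classical
  set F : Finset (Finset (EuclideanSpace ℝ (Fin N))) := hfin.toFinset with hFdef
  have hF : S.faces = ↑F := hfin.coe_toFinset.symm
  set V : Finset (EuclideanSpace ℝ (Fin N)) := F.biUnion id with hV
  -- compactness of the underlying space
  have hKc : IsCompact S.space := by
    rw [SimplicialComplex.space, hF]
    exact (Finset.finite_toSet F).isCompact_biUnion
      (fun s _ => (s.finite_toSet).isCompact_convexHull ℝ)
  haveI : CompactSpace ↥S.space := isCompact_iff_compactSpace.mp hKc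
  -- restricted weight functions are continuous
  have hcont : ∀ v : EuclideanSpace ℝ (Fin N),
      Continuous (fun p : ↥S.space => repW S ↑p v) :=
    fun v => (continuousOn_repW hF v).restrict
  -- the open star cover and its Lebesgue number
  set U : {u // u ∈ V} → Set ↥S.space := fun v => {p | 0 < repW S ↑p ↑v} with hUdef
  have hUopen : ∀ v, IsOpen (U v) := fun v => isOpen_lt continuous_const (hcont ↑v)
  have hUcover : (Set.univ : Set ↥S.space) ⊆ ⋃ v, U v := by
    intro p _
    obtain ⟨u, hu, hne⟩ := exists_mem_suppF hF p.2
    have huV : u ∈ V := by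
      obtain ⟨⟨s, hsF, hus⟩, -⟩ := (suppF_def (S := S) (F := F) (↑p) u).1 hu
      exact Finset.mem_biUnion.2 ⟨s, hsF, hus⟩
    refine Set.mem_iUnion.2 ⟨⟨u, huV⟩, ?_⟩
    exact lt_of_le_of_ne (repW_nonneg p.2 u) (Ne.symm hne)
  obtain ⟨δ, hδ, hball⟩ := lebesgue_number_lemma_of_metric isCompact_univ hUopen hUcover
  refine ⟨δ / 2, by linarith, ?_⟩
  intro W _ f g hfg
  -- at every point, a common vertex has positive weight for both maps
  have hkey : ∀ w : W, ∃ v : {u // u ∈ V},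
      0 < repW S ↑(f w) ↑v ∧ 0 < repW S ↑(g w) ↑v := by
    intro w
    obtain ⟨v, hv⟩ := hball (f w) (Set.mem_univ _)
    refine ⟨v, hv (mem_ball_self (by linarith)), hv ?_⟩
    rw [mem_ball, dist_comm]
    calc dist (f w) (g w) ≤ δ / 2 := hfg w
    _ < δ := by linarith
  -- the midpoint map
  set c : W → EuclideanSpace ℝ (Fin N) → ℝ :=
    fun w u => min (repW S ↑(f w) u) (repW S ↑(g w) u) with hcdef
  have hc_cont : ∀ u, Continuous (fun w => c w u) := fun u =>
    ((hcont u).comp f.continuous).min ((hcont u).comp g.continuous)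
  have hc_nonneg : ∀ w u, 0 ≤ c w u := fun w u =>
    le_min (repW_nonneg (f w).2 u) (repW_nonneg (g w).2 u)
  set Sw : W → ℝ := fun w => ∑ u ∈ V, c w u with hSwdef
  have hSw_cont : Continuous Sw := continuous_finset_sum _ (fun u _ => hc_cont u)
  have hSw_pos : ∀ w, 0 < Sw w := by
    intro w
    obtain ⟨v, hv1, hv2⟩ := hkey w
    calc (0:ℝ) < c w ↑v := lt_min hv1 hv2
    _ ≤ Sw w := Finset.single_le_sum (fun u _ => hc_nonneg w u) v.2
  set m : W → EuclideanSpace ℝ (Fin N) :=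
    fun w => (Sw w)⁻¹ • ∑ u ∈ V, c w u • u with hmdef
  have hm_cont : Continuous m :=
    (hSw_cont.inv₀ (fun w => (hSw_pos w).ne')).smul
      (continuous_finset_sum _ (fun u _ => (hc_cont u).smul continuous_const))
  -- m w lies in the hull of the support of f w (and of g w)
  have hmmem : ∀ (h : C(W, ↥S.space)) (w : W),
      (∀ u, u ∈ V → u ∉ suppF S F ↑(h w) → c w u = 0) →
      m w ∈ convexHull ℝ ((suppF S F ↑(h w) : Finset _) : Set (EuclideanSpace ℝ (Fin N))) := by
    intro h w hzero
    have hsub : suppF S F ↑(h w) ⊆ V := by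
      intro u hu
      obtain ⟨⟨s, hsF, hus⟩, -⟩ := (suppF_def (S := S) (F := F) _ u).1 hu
      exact Finset.mem_biUnion.2 ⟨s, hsF, hus⟩
    have hsum_eq : ∑ u ∈ suppF S F ↑(h w), c w u = Sw w :=
      Finset.sum_subset hsub (fun u hu hnu => hzero u hu hnu)
    have hcomb_eq : ∑ u ∈ suppF S F ↑(h w), c w u • u = ∑ u ∈ V, c w u • u :=
      Finset.sum_subset hsub (fun u hu hnu => by rw [hzero u hu hnu, zero_smul])
    have hmc : m w = (suppF S F ↑(h w)).centerMass (c w) id := by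
      rw [Finset.centerMass]
      simp only [id]
      rw [hsum_eq, hcomb_eq]
    rw [hmc]
    exact Finset.centerMass_mem_convexHull _ (fun u _ => hc_nonneg w u)
      (by rw [hsum_eq]; exact hSw_pos w) (fun u hu => Finset.mem_coe.2 hu)
  have hzf : ∀ w u, u ∈ V → u ∉ suppF S F ↑(f w) → c w u = 0 := by
    intro w u huV hu
    have : repW S ↑(f w) u = 0 := by
      by_contra hne
      exact hu ((suppF_def (S := S) (F := F) _ u).2 ⟨Finset.mem_biUnion.1 huV, hne⟩)
    exact le_antisymm (le_trans (min_le_left _ _) (le_of_eq this)) (hc_nonneg w u)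
  have hzg : ∀ w u, u ∈ V → u ∉ suppF S F ↑(g w) → c w u = 0 := by
    intro w u huV hu
    have : repW S ↑(g w) u = 0 := by
      by_contra hne
      exact hu ((suppF_def (S := S) (F := F) _ u).2 ⟨Finset.mem_biUnion.1 huV, hne⟩)
    exact le_antisymm (le_trans (min_le_right _ _) (le_of_eq this)) (hc_nonneg w u)
  have hmf : ∀ w, m w ∈ convexHull ℝ
      ((suppF S F ↑(f w) : Finset _) : Set (EuclideanSpace ℝ (Fin N))) :=
    fun w => hmmem f w (hzf w)
  have hmg : ∀ w, m w ∈ convexHull ℝ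
      ((suppF S F ↑(g w) : Finset _) : Set (EuclideanSpace ℝ (Fin N))) :=
    fun w => hmmem g w (hzg w)
  have hmK : ∀ w, m w ∈ S.space := fun w => hull_suppF_subset hF (f w).2 (hmf w)
  set mMap : C(W, ↥S.space) := ⟨fun w => ⟨m w, hmK w⟩, hm_cont.subtype_mk _⟩ with hmMap
  -- first homotopy : f to mMap, within the hull of supp (f w)
  have seg_mem : ∀ (h : C(W, ↥S.space)) (w : W) (t : ↥unitInterval),
      (∀ x, x ∈ ({↑(h w), m w} : Set (EuclideanSpace ℝ (Fin N))) →
        x ∈ convexHull ℝ ((suppF S F ↑(h w) : Finset _) : Set (EuclideanSpace ℝ (Fin N)))) →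
      (1 - (t : ℝ)) • (↑(h w) : EuclideanSpace ℝ (Fin N)) + (t : ℝ) • m w ∈ S.space := by
    intro h w t hmem
    refine hull_suppF_subset hF (h w).2 ?_
    refine (convex_convexHull ℝ _) (hmem _ (Set.mem_insert _ _))
      (hmem _ (Set.mem_insert_of_mem _ rfl)) ?_ t.2.1 (by ring)
    have := t.2.2
    linarith
  have H1 : ContinuousMap.Homotopy f mMap := by
    refine ⟨⟨fun p => ⟨(1 - (p.1 : ℝ)) • (↑(f p.2) : EuclideanSpace ℝ (Fin N))
      + (p.1 : ℝ) • m p.2, ?_⟩, ?_⟩, ?_, ?_⟩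
    · refine seg_mem f p.2 p.1 ?_
      rintro x (rfl | hx)
      · exact mem_hull_suppF hF (f p.2).2
      · rw [Set.mem_singleton_iff] at hx
        subst hx
        exact hmf p.2
    · refine Continuous.subtype_mk ?_ _
      refine Continuous.add ?_ ?_
      · exact (continuous_const.sub (continuous_subtype_val.comp continuous_fst)).smul
          ((continuous_subtype_val.comp f.continuous).comp continuous_snd)
      · exact (continuous_subtype_val.comp continuous_fst).smul (hm_cont.comp continuous_snd)
    · intro w
      apply Subtype.ext
      simp
    · intro w
      apply Subtype.ext
      simp [hmMap]
  have H2 : ContinuousMap.Homotopy mMap g := by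
    refine ⟨⟨fun p => ⟨(1 - (p.1 : ℝ)) • m p.2
      + (p.1 : ℝ) • (↑(g p.2) : EuclideanSpace ℝ (Fin N)), ?_⟩, ?_⟩, ?_, ?_⟩
    · -- symmetric segment inside hull of supp (g w)
      refine hull_suppF_subset hF (g p.2).2 ?_
      refine (convex_convexHull ℝ _) (hmg p.2) (mem_hull_suppF hF (g p.2).2) ?_ p.1.2.1 (by ring)
      have := p.1.2.2
      linarith
    · refine Continuous.subtype_mk ?_ _
      refine Continuous.add ?_ ?_
      · exact (continuous_const.sub (continuous_subtype_val.comp continuous_fst)).smul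
          (hm_cont.comp continuous_snd)
      · exact (continuous_subtype_val.comp continuous_fst).smul
          ((continuous_subtype_val.comp g.continuous).comp continuous_snd)
    · intro w
      apply Subtype.ext
      simp [hmMap]
    · intro w
      apply Subtype.ext
      simp
  exact ⟨H1.trans H2⟩
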